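/- If a network N is a matroidal network associated with a matroid representable over a finite field F, then N is scalar-linearly solvable (over some finite extension of F). -/

import Mathlib

open scoped Classical

/-- A `(1,1)` (scalar-linear) network code solution over a field `K`: a symbol function `s`
assigning to each message assignment and each edge a field symbol, such that each edge
carries a fixed linear combination of the messages generated at, and the symbols entering,
its start node, and each demand is recovered by a fixed linear combination of the demanding
node's inputs, for every message assignment. -/
def ScalarLinearSolution (K : Type*) [Field K] {ν ε μ : Type*} [Fintype ε] [Fintype μ]
    (src tgt : ε → ν) (gen dem : ν → μ → Prop) : Prop :=
  ∃ s : (μ → K) → ε → K,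
    (∀ e : ε, ∃ (C : μ → K) (D : ε → K),
      ∀ a, s a e =
        (∑ m ∈ Finset.univ.filter (fun m : μ => gen (src e) m), C m * a m) +
        ∑ e' ∈ Finset.univ.filter (fun e' : ε => tgt e' = src e), D e' * s a e') ∧
    (∀ (x : ν) (m' : μ), dem x m' →
      ∃ (C : μ → K) (D : ε → K),
        ∀ a, a m' =
          (∑ m ∈ Finset.univ.filter (fun m : μ => gen x m), C m * a m) +
          ∑ e ∈ Finset.univ.filter (fun e : ε => tgt e = x), D e * s a e)

/-- The semiring structure underlying a field structure (helper to state existential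
quantification over field structures). -/
def fieldSemiring (K : Type*) (iK : Field K) : Semiring K := by
  letI := iK; infer_instance

/-- The network is scalar-linearly solvable over some finite field extension of `F`. -/
def ScalarLinearlySolvableOverExt (F : Type*) [Field F] {ν ε μ : Type*}
    [Fintype ε] [Fintype μ] (src tgt : ε → ν) (gen dem : ν → μ → Prop) : Prop :=
  ∃ (K : Type) (iK : Field K) (_ : Fintype K)
    (_ : @Algebra F K _ (fieldSemiring K iK)),
    @ScalarLinearSolution K iK ν ε μ _ _ src tgt gen dem

/-- Auxiliary carrier type with no pre-existing algebraic instances. -/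
def NetAuxCarrier (n : ℕ) : Type := Fin n

noncomputable instance (n : ℕ) : Fintype (NetAuxCarrier n) := by unfold NetAuxCarrier; infer_instance

theorem core {F : Type*} [Field F] {ν ε μ : Type*} [Fintype ε] [Fintype μ]
    {d1 : ℕ} (src tgt : ε → ν) (gen dem : ν → μ → Prop)
    (V : μ ⊕ ε → Fin d1 → F)
    (InS OutS : ν → Set (μ ⊕ ε))
    (hIn : ∀ x, InS x = (Sum.inl '' {m | gen x m}) ∪ (Sum.inr '' {e | tgt e = x}))
    (hOut : ∀ x, OutS x = (Sum.inl '' {m | dem x m}) ∪ (Sum.inr '' {e | src e = x}))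
    (hindep : LinearIndependent F fun m : μ => V (Sum.inl m))
    (hrank : ∀ x : ν,
      Module.finrank F (Submodule.span F (V '' InS x)) =
      Module.finrank F (Submodule.span F (V '' (InS x ∪ OutS x)))) :
    ScalarLinearSolution F src tgt gen dem := by
  classical
  have hspan : ∀ x, Submodule.span F (V '' InS x)
      = Submodule.span F (V '' (InS x ∪ OutS x)) := fun x =>
    Submodule.eq_of_le_of_finrank_eq
      (Submodule.span_mono (Set.image_mono Set.subset_union_left)) (hrank x)
  have hmemOut : ∀ x i, i ∈ InS x ∪ OutS x → V i ∈ Submodule.span F (V '' InS x) := by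
    intro x i hi
    rw [hspan x]
    exact Submodule.subset_span (Set.mem_image_of_mem _ hi)
  -- membership facts
  have hInl : ∀ x m, Sum.inl m ∈ InS x ↔ gen x m := by intro x m; rw [hIn]; simp
  have hInr : ∀ x e, Sum.inr e ∈ InS x ↔ tgt e = x := by intro x e; rw [hIn]; simp
  have hOutl : ∀ x m, Sum.inl m ∈ OutS x ↔ dem x m := by intro x m; rw [hOut]; simp
  have hOutr : ∀ x e, Sum.inr e ∈ OutS x ↔ src e = x := by intro x e; rw [hOut]; simp
  -- basis extension
  set w : μ → Fin d1 → F := fun m => V (Sum.inl m) with hw_def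
  have hw : LinearIndepOn F id (Set.range w) :=
    (linearIndepOn_id_range_iff hindep.injective).mpr hindep
  let b := Module.Basis.extend hw
  have hwmem : ∀ m, w m ∈ hw.extend (Set.subset_univ _) := fun m =>
    hw.subset_extend _ ⟨m, rfl⟩
  let idx : μ → hw.extend (Set.subset_univ _) := fun m => ⟨w m, hwmem m⟩
  have winj : Function.Injective w := hindep.injective
  let Φ : (μ → F) → (Fin d1 → F) →ₗ[F] F := fun a =>
    ∑ m, a m • ((Finsupp.lapply (idx m)).comp b.repr.toLinearMap)
  have hΦw : ∀ a m', Φ a (w m') = a m' := by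
    intro a m'
    have hb : b (idx m') = w m' := Module.Basis.extend_apply_self hw _
    simp only [Φ, LinearMap.sum_apply, LinearMap.smul_apply, LinearMap.coe_comp,
      Function.comp_apply, LinearEquiv.coe_toLinearMap, Finsupp.lapply_apply]
    rw [← hb, Module.Basis.repr_self]
    rw [Finset.sum_eq_single m']
    · simp
    · intro m _ hm
      have : idx m ≠ idx m' := by
        intro h
        exact hm (winj (congrArg Subtype.val h))
      rw [Finsupp.single_apply, if_neg (fun h => this h.symm)]
      simp
    · simp
  -- decomposition
  have decomp : ∀ (x : ν) (u : Fin d1 → F), u ∈ Submodule.span F (V '' InS x) →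
      ∃ (C : μ → F) (D : ε → F), ∀ a : μ → F,
        Φ a u = (∑ m ∈ Finset.univ.filter (fun m : μ => gen x m), C m * a m)
          + ∑ e ∈ Finset.univ.filter (fun e : ε => tgt e = x),
              D e * Φ a (V (Sum.inr e)) := by
    intro x u hu
    rw [Finsupp.mem_span_image_iff_linearCombination] at hu
    obtain ⟨l, hl, hlu⟩ := hu
    have hsupp : ∀ i, i ∉ InS x → l i = 0 := by
      intro i hi
      by_contra h
      exact hi (hl (Finsupp.mem_support_iff.2 h))
    refine ⟨fun m => l (Sum.inl m), fun e => l (Sum.inr e), fun a => ?_⟩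
    have hu2 : u = ∑ i : μ ⊕ ε, l i • V i := by
      rw [← hlu, Finsupp.linearCombination_apply, Finsupp.sum_fintype]
      intro i; simp
    rw [hu2, map_sum]
    simp_rw [map_smul, smul_eq_mul]
    rw [Fintype.sum_sum_type]
    congr 1
    · rw [← Finset.sum_filter_of_ne (p := fun m : μ => gen x m)
        (f := fun m => l (Sum.inl m) * Φ a (V (Sum.inl m)))]
      · exact Finset.sum_congr rfl (fun m _ => by rw [hΦw a m])
      · intro m _ hm
        by_contra hg
        exact hm (by rw [hsupp _ (fun hmem => hg ((hInl x m).1 hmem)), zero_mul])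
    · rw [← Finset.sum_filter_of_ne (p := fun e : ε => tgt e = x)
        (f := fun e => l (Sum.inr e) * Φ a (V (Sum.inr e)))]
      intro e _ he
      by_contra hg
      exact he (by rw [hsupp _ (fun hmem => hg ((hInr x e).1 hmem)), zero_mul])
  refine ⟨fun a e => Φ a (V (Sum.inr e)), ?_, ?_⟩
  · intro e
    obtain ⟨C, D, hCD⟩ := decomp (src e) (V (Sum.inr e))
      (hmemOut (src e) _ (Or.inr ((hOutr _ e).2 rfl)))
    exact ⟨C, D, hCD⟩
  · intro x m' hdem
    obtain ⟨C, D, hCD⟩ := decomp x (V (Sum.inl m'))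
      (hmemOut x _ (Or.inr ((hOutl x m').2 hdem)))
    exact ⟨C, D, fun a => (hΦw a m').symm.trans (hCD a)⟩

theorem transferSol {K L : Type*} [Field K] [Field L] (eqv : K ≃+* L)
    {ν ε μ : Type*} [Fintype ε] [Fintype μ]
    (src tgt : ε → ν) (gen dem : ν → μ → Prop)
    (h : ScalarLinearSolution L src tgt gen dem) :
    ScalarLinearSolution K src tgt gen dem := by
  obtain ⟨s, h1, h2⟩ := h
  refine ⟨fun a e => eqv.symm (s (fun m => eqv (a m)) e), ?_, ?_⟩
  · intro e
    obtain ⟨C, D, hCD⟩ := h1 e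
    refine ⟨fun m => eqv.symm (C m), fun e' => eqv.symm (D e'), fun a => ?_⟩
    show eqv.symm (s (fun m => eqv (a m)) e) = _
    rw [hCD (fun m => eqv (a m))]
    simp [map_add, map_sum, map_mul, RingEquiv.symm_apply_apply]
  · intro x m' hd
    obtain ⟨C, D, hCD⟩ := h2 x m' hd
    refine ⟨fun m => eqv.symm (C m), fun e => eqv.symm (D e), fun a => ?_⟩
    have := congrArg eqv.symm (hCD (fun m => eqv (a m)))
    rw [RingEquiv.symm_apply_apply] at this
    show a m' = _
    rw [this]
    simp [map_add, map_sum, map_mul, RingEquiv.symm_apply_apply]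

/-- If a network is a matroidal network associated with a matroid representable over a finite
field `F` — i.e., there is a network-matroid mapping `f` from messages and edges to the
columns of a matrix `A` over `F` that is injective on messages, maps the messages to an
independent set of columns, and for each node `x` the columns of `In(x)` and of
`In(x) ∪ Out(x)` span subspaces of the same rank — then the network is scalar-linearly
solvable (over some finite extension of `F`). -/
theorem stmt19 {F : Type*} [Field F] [Fintype F] {ν ε μ : Type*}
    [Fintype ν] [Fintype ε] [Fintype μ]
    (src tgt : ε → ν) (gen dem : ν → μ → Prop)
    -- finite directed acyclic multigraph
    (ord : ν → ℕ) (hord : ∀ e, ord (src e) < ord (tgt e))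
    {d1 d2 : ℕ} (A : Matrix (Fin d1) (Fin d2) F)
    (f : μ ⊕ ε → Fin d2)
    (col : Fin d2 → Fin d1 → F) (hcol : ∀ j i, col j i = A i j)
    (InS OutS : ν → Set (μ ⊕ ε))
    (hIn : ∀ x, InS x = (Sum.inl '' {m | gen x m}) ∪ (Sum.inr '' {e | tgt e = x}))
    (hOut : ∀ x, OutS x = (Sum.inl '' {m | dem x m}) ∪ (Sum.inr '' {e | src e = x}))
    -- f is one-to-one on the messages
    (hinj : Function.Injective fun m : μ => f (Sum.inl m))
    -- f(μ) is an independent set of columns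
    (hindep : LinearIndependent F fun m : μ => col (f (Sum.inl m)))
    -- rank condition: r(f(In(x))) = r(f(In(x) ∪ Out(x))) for every node x
    (hrank : ∀ x : ν,
      Module.finrank F (Submodule.span F (col '' (f '' InS x))) =
      Module.finrank F (Submodule.span F (col '' (f '' (InS x ∪ OutS x))))) :
    ScalarLinearlySolvableOverExt F src tgt gen dem := by
  classical
  have hrank' : ∀ x : ν,
      Module.finrank F (Submodule.span F ((fun i => col (f i)) '' InS x)) =
      Module.finrank F (Submodule.span F ((fun i => col (f i)) '' (InS x ∪ OutS x))) := by
    intro x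
    have h1 : (fun i => col (f i)) '' InS x = col '' (f '' InS x) :=
      (Set.image_image col f (InS x)).symm
    have h2 : (fun i => col (f i)) '' (InS x ∪ OutS x) = col '' (f '' (InS x ∪ OutS x)) :=
      (Set.image_image col f (InS x ∪ OutS x)).symm
    rw [h1, h2]
    exact hrank x
  have hsolF : ScalarLinearSolution F src tgt gen dem :=
    core src tgt gen dem (fun i => col (f i)) InS OutS hIn hOut hindep hrank'
  let e : NetAuxCarrier (Fintype.card F) ≃ F := (Fintype.equivFin F).symm
  refine ⟨NetAuxCarrier (Fintype.card F), e.field, inferInstance, ?_, ?_⟩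
  · letI := e.field
    exact RingHom.toAlgebra (e.ringEquiv.symm : F →+* _)
  · letI := e.field
    exact transferSol e.ringEquiv src tgt gen dem hsolF
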